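/- (Jointly concave GAN discriminator value) Define f(a,b) = a log σ(t*) + b log(1-σ(t*)) evaluated at the optimum t* = log(a/b), i.e., f(a,b) = a log(a/(a+b)) + b log(b/(a+b)) for a, b > 0. Then for two densities μ(z) and ν(z), the optimal value of the discriminator objective ∫ [μ log σ(T) + ν log(1-σ(T))] dz equals -2 log 2 + 2·JS(μ,ν), where JS is the Jensen-Shannon divergence; in particular the optimal value is at least -2 log 2, with equality iff μ = ν a.e. -/

import Mathlib

open MeasureTheory Real

lemma klpt (x y : ℝ) (hx : 0 < x) (hy : 0 < y) : x - y ≤ x * Real.log (x / y) := by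
  have h := Real.log_le_sub_one_of_pos (div_pos hy hx)
  have hlog : Real.log (x / y) = - Real.log (y / x) := by
    rw [← Real.log_inv]; congr 1; field_simp
  have hxy : x * (y / x) = y := by field_simp
  rw [hlog]
  nlinarith [mul_le_mul_of_nonneg_left h hx.le]

lemma klpt_strict (x y : ℝ) (hx : 0 < x) (hy : 0 < y) (hne : x ≠ y) :
    x - y < x * Real.log (x / y) := by
  have hne' : y / x ≠ 1 := by
    intro h; exact hne (by field_simp at h; linarith)
  have h := Real.log_lt_sub_one_of_pos (div_pos hy hx) hne'
  have hlog : Real.log (x / y) = - Real.log (y / x) := by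
    rw [← Real.log_inv]; congr 1; field_simp
  have hxy : x * (y / x) = y := by field_simp
  rw [hlog]
  nlinarith [mul_lt_mul_of_pos_left h hx]

lemma ptwise (a b : ℝ) (ha : 0 < a) (hb : 0 < b) :
    0 ≤ a * Real.log (a / (a + b)) + b * Real.log (b / (a + b)) + (a + b) * Real.log 2 ∧
    (a * Real.log (a / (a + b)) + b * Real.log (b / (a + b)) + (a + b) * Real.log 2 = 0 ↔ a = b) := by
  have hs : 0 < a + b := by linarith
  have hm : 0 < (a + b) / 2 := by linarith
  have hE : a * Real.log (a / (a + b)) + b * Real.log (b / (a + b)) + (a + b) * Real.log 2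
      = a * Real.log (a / ((a + b) / 2)) + b * Real.log (b / ((a + b) / 2)) := by
    rw [Real.log_div ha.ne' hm.ne', Real.log_div hb.ne' hm.ne',
        Real.log_div ha.ne' hs.ne', Real.log_div hb.ne' hs.ne',
        Real.log_div hs.ne' (by norm_num : (2:ℝ) ≠ 0)]
    ring
  have h1 := klpt a ((a + b) / 2) ha hm
  have h2 := klpt b ((a + b) / 2) hb hm
  constructor
  · rw [hE]; linarith
  · constructor
    · intro h0
      by_contra hne
      have hna : a ≠ (a + b) / 2 := by intro h; exact hne (by linarith)
      have := klpt_strict a ((a + b) / 2) ha hm hna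
      rw [hE] at h0; linarith
    · intro hab
      subst hab
      have : a / ((a + a) / 2) = 1 := by field_simp; norm_num
      rw [hE, this, Real.log_one]; ring

/-- Jointly concave GAN discriminator value: for positive
densities `μd` and `νd` on ℝ^P, the optimal value of the discriminator
objective (obtained by the pointwise maximizer `t* = log(a/b)`),
`V = ∫ [μ log(μ/(μ+ν)) + ν log(ν/(μ+ν))]`, equals `-2 log 2 + 2·JS(μ,ν)`
where `JS` is the Jensen-Shannon divergence; in particular `V ≥ -2 log 2`,
with equality iff `μ = ν` a.e. -/
theorem gan_optimal_value_jensen_shannon (P : ℕ)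
    (μd νd : EuclideanSpace ℝ (Fin P) → ℝ)
    (hμ_pos : ∀ z, 0 < μd z) (hν_pos : ∀ z, 0 < νd z)
    (hμ_one : ∫ z, μd z = 1) (hν_one : ∫ z, νd z = 1)
    (V JS : ℝ)
    (hV : V = ∫ z, (μd z * Real.log (μd z / (μd z + νd z)) +
                    νd z * Real.log (νd z / (μd z + νd z))))
    (hJS : JS = (1 / 2) * (∫ z, μd z * Real.log (μd z / ((μd z + νd z) / 2))) +
                (1 / 2) * (∫ z, νd z * Real.log (νd z / ((μd z + νd z) / 2))))
    (hint1 : Integrable (fun z => μd z * Real.log (μd z / (μd z + νd z))))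
    (hint2 : Integrable (fun z => νd z * Real.log (νd z / (μd z + νd z)))) :
    V = -2 * Real.log 2 + 2 * JS ∧
    -2 * Real.log 2 ≤ V ∧
    (V = -2 * Real.log 2 ↔ ∀ᵐ z, μd z = νd z) := by
  have hμint : Integrable μd := by
    by_contra h; rw [integral_undef h] at hμ_one; norm_num at hμ_one
  have hνint : Integrable νd := by
    by_contra h; rw [integral_undef h] at hν_one; norm_num at hν_one
  set A := ∫ z, μd z * Real.log (μd z / (μd z + νd z)) with hA
  set B := ∫ z, νd z * Real.log (νd z / (μd z + νd z)) with hB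
  -- rewrite halved-log integrals
  have hlogμ : ∀ z, μd z * Real.log (μd z / ((μd z + νd z) / 2))
      = μd z * Real.log (μd z / (μd z + νd z)) + μd z * Real.log 2 := by
    intro z
    have hs : (0:ℝ) < μd z + νd z := by linarith [hμ_pos z, hν_pos z]
    rw [Real.log_div (hμ_pos z).ne' (by positivity),
        Real.log_div (hμ_pos z).ne' hs.ne',
        Real.log_div hs.ne' (by norm_num : (2:ℝ) ≠ 0)]
    ring
  have hlogν : ∀ z, νd z * Real.log (νd z / ((μd z + νd z) / 2))
      = νd z * Real.log (νd z / (μd z + νd z)) + νd z * Real.log 2 := by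
    intro z
    have hs : (0:ℝ) < μd z + νd z := by linarith [hμ_pos z, hν_pos z]
    rw [Real.log_div (hν_pos z).ne' (by positivity),
        Real.log_div (hν_pos z).ne' hs.ne',
        Real.log_div hs.ne' (by norm_num : (2:ℝ) ≠ 0)]
    ring
  have hI1 : (∫ z, μd z * Real.log (μd z / ((μd z + νd z) / 2))) = A + Real.log 2 := by
    have : (∫ z, μd z * Real.log (μd z / ((μd z + νd z) / 2)))
        = ∫ z, (μd z * Real.log (μd z / (μd z + νd z)) + μd z * Real.log 2) := by
      congr 1; funext z; exact hlogμ z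
    rw [this, integral_add hint1 (hμint.mul_const _), integral_mul_const, hμ_one, one_mul]
  have hI2 : (∫ z, νd z * Real.log (νd z / ((μd z + νd z) / 2))) = B + Real.log 2 := by
    have : (∫ z, νd z * Real.log (νd z / ((μd z + νd z) / 2)))
        = ∫ z, (νd z * Real.log (νd z / (μd z + νd z)) + νd z * Real.log 2) := by
      congr 1; funext z; exact hlogν z
    rw [this, integral_add hint2 (hνint.mul_const _), integral_mul_const, hν_one, one_mul]
  have hVAB : V = A + B := by rw [hV, integral_add hint1 hint2]
  have hJS' : JS = (A + B) / 2 + Real.log 2 := by rw [hJS, hI1, hI2]; ring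
  have hfirst : V = -2 * Real.log 2 + 2 * JS := by rw [hVAB, hJS']; ring
  -- the nonnegative function
  set g : EuclideanSpace ℝ (Fin P) → ℝ := fun z =>
    μd z * Real.log (μd z / (μd z + νd z)) + νd z * Real.log (νd z / (μd z + νd z))
      + (μd z + νd z) * Real.log 2 with hg
  have hgint : Integrable g := by
    exact (hint1.add hint2).add ((hμint.add hνint).mul_const _)
  have hgI : (∫ z, g z) = V + 2 * Real.log 2 := by
    have e1 : (∫ z, g z)
        = (∫ z, (μd z * Real.log (μd z / (μd z + νd z)) + νd z * Real.log (νd z / (μd z + νd z))))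
          + ∫ z, (μd z + νd z) * Real.log 2 :=
      integral_add (hint1.add hint2) ((hμint.add hνint).mul_const _)
    have e2 : (∫ z, (μd z + νd z) * Real.log 2) = (∫ z, (μd z + νd z)) * Real.log 2 :=
      integral_mul_const _ _
    have e3 : (∫ z, (μd z + νd z)) = (∫ z, μd z) + ∫ z, νd z := integral_add hμint hνint
    rw [e1, e2, e3, hμ_one, hν_one, hVAB, integral_add hint1 hint2]
    ring
  have hgnn : ∀ z, 0 ≤ g z := fun z => (ptwise _ _ (hμ_pos z) (hν_pos z)).1
  refine ⟨hfirst, ?_, ?_⟩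
  · have : (0:ℝ) ≤ ∫ z, g z := integral_nonneg hgnn
    rw [hgI] at this; linarith
  · have hzero : (∫ z, g z) = 0 ↔ g =ᵐ[volume] 0 :=
      integral_eq_zero_iff_of_nonneg hgnn hgint
    constructor
    · intro hVeq
      have h0 : (∫ z, g z) = 0 := by rw [hgI, hVeq]; ring
      filter_upwards [hzero.mp h0] with z hz
      exact ((ptwise _ _ (hμ_pos z) (hν_pos z)).2).mp hz
    · intro hae
      have h0 : g =ᵐ[volume] 0 := by
        filter_upwards [hae] with z hz
        exact ((ptwise _ _ (hμ_pos z) (hν_pos z)).2).mpr hz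
      have := hzero.mpr h0
      rw [hgI] at this; linarith
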